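/- If a rectangular design with k < mn satisfies θ₁ = θ₂ = 0 (Latin semi-regular), then λ₃ − λ₂ = nr(mn − k)/d > 0 and λ₃ − λ₁ = mr(mn − k)/d > 0, where d = mn(m−1)(n−1). -/

import Mathlib

/-- for a Latin semi-regular rectangular design (`θ₁ = θ₂ = 0`)
with `k < mn` and `r > 0`,
`λ₃ − λ₂ = nr(mn − k)/d > 0` and `λ₃ − λ₁ = mr(mn − k)/d > 0`,
where `d = mn(m−1)(n−1)`. -/
theorem latin_semi_regular_lambda_diffs (m n : ℕ) (hm : 2 ≤ m) (hn : 2 ≤ n)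
    (b r k l1 l2 l3 : ℝ) (hr : 0 < r) (hk : k < (m : ℝ) * n)
    (hbk : b * k = (m : ℝ) * n * r)
    (hrel : ((n : ℝ) - 1) * l1 + ((m : ℝ) - 1) * l2
        + ((n : ℝ) - 1) * ((m : ℝ) - 1) * l3 = r * (k - 1))
    (htheta1 : r - l1 + ((m : ℝ) - 1) * (l2 - l3) = 0)
    (htheta2 : r - l2 + ((n : ℝ) - 1) * (l1 - l3) = 0) :
    (l3 - l2 = (n : ℝ) * r * ((m : ℝ) * n - k) / ((m : ℝ) * n * ((m : ℝ) - 1) * ((n : ℝ) - 1))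
      ∧ 0 < l3 - l2) ∧
    (l3 - l1 = (m : ℝ) * r * ((m : ℝ) * n - k) / ((m : ℝ) * n * ((m : ℝ) - 1) * ((n : ℝ) - 1))
      ∧ 0 < l3 - l1) := by
  have hM : (2 : ℝ) ≤ (m : ℝ) := by exact_mod_cast hm
  have hN : (2 : ℝ) ≤ (n : ℝ) := by exact_mod_cast hn
  have hm0 : (0:ℝ) < m := by linarith
  have hn0 : (0:ℝ) < n := by linarith
  have hm1 : (0:ℝ) < (m:ℝ) - 1 := by linarith
  have hn1 : (0:ℝ) < (n:ℝ) - 1 := by linarith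
  have hd : 0 < (m : ℝ) * n * ((m : ℝ) - 1) * ((n : ℝ) - 1) :=
    mul_pos (mul_pos (mul_pos hm0 hn0) hm1) hn1
  have hd' : ((m : ℝ) * n * ((m : ℝ) - 1) * ((n : ℝ) - 1)) ≠ 0 := ne_of_gt hd
  have hc : (l3 - l2) * ((m : ℝ) * n * ((m : ℝ) - 1) * ((n : ℝ) - 1))
      = (n : ℝ) * r * ((m : ℝ) * n - k) := by
    linear_combination (-(n : ℝ)) * hrel + (-(n : ℝ) * m * ((n : ℝ) - 1)) * htheta1
      + (-(n : ℝ) * ((m : ℝ) - 1)) * htheta2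
  have ha : (l3 - l1) * ((m : ℝ) * n * ((m : ℝ) - 1) * ((n : ℝ) - 1))
      = (m : ℝ) * r * ((m : ℝ) * n - k) := by
    linear_combination (-(m : ℝ)) * hrel + (-(m : ℝ) * ((n : ℝ) - 1)) * htheta1
      + (-(m : ℝ) * n * ((m : ℝ) - 1)) * htheta2
  have hc' : l3 - l2
      = (n : ℝ) * r * ((m : ℝ) * n - k) / ((m : ℝ) * n * ((m : ℝ) - 1) * ((n : ℝ) - 1)) := by
    rw [eq_div_iff hd']
    linarith [hc]
  have ha' : l3 - l1
      = (m : ℝ) * r * ((m : ℝ) * n - k) / ((m : ℝ) * n * ((m : ℝ) - 1) * ((n : ℝ) - 1)) := by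
    rw [eq_div_iff hd']
    linarith [ha]
  have hcpos : 0 < l3 - l2 := by
    rw [hc']
    exact div_pos (mul_pos (mul_pos hn0 hr) (by linarith)) hd
  have hapos : 0 < l3 - l1 := by
    rw [ha']
    exact div_pos (mul_pos (mul_pos hm0 hr) (by linarith)) hd
  exact ⟨⟨hc', hcpos⟩, ⟨ha', hapos⟩⟩
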